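/- With the QSP unitary U of the previous construction, unitarity implies the Laurent polynomial identity F(ω)F(1/ω) + G(ω)G(1/ω) = 1 for all ω on the complex unit circle. -/

import Mathlib

open Complex Matrix

/-- Unitarity of the QSP block-encoding implies `F(ω)F(1/ω) + G(ω)G(1/ω) = 1` on the unit
circle. -/
theorem qsp_unitarity_identity (d : ℕ) (fc gc : ℤ → ℝ)
    (F G : ℂ → ℂ)
    (hF : ∀ ω : ℂ, F ω = ∑ n ∈ Finset.Icc (-(d : ℤ)) d, (fc n : ℂ) * ω ^ n)
    (hG : ∀ ω : ℂ, G ω = ∑ n ∈ Finset.Icc (-(d : ℤ)) d, (gc n : ℂ) * ω ^ n)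
    (hunitary : ∀ ω : ℂ, ‖ω‖ = 1 →
      (!![F ω, Complex.I * G ω; Complex.I * G ω⁻¹, F ω⁻¹] : Matrix (Fin 2) (Fin 2) ℂ)
        ∈ Matrix.unitaryGroup (Fin 2) ℂ) :
    ∀ ω : ℂ, ‖ω‖ = 1 → F ω * F ω⁻¹ + G ω * G ω⁻¹ = 1 := by
  intro ω hω
  have hω0 : ω ≠ 0 := by
    intro h; rw [h] at hω; simp at hω
  have hconj : (starRingEnd ℂ) ω = ω⁻¹ := by
    have h1 : ω * (starRingEnd ℂ) ω = 1 := by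
      rw [Complex.mul_conj]
      norm_cast
      rw [Complex.normSq_eq_norm_sq, hω]; norm_num
    field_simp
    linear_combination h1
  have hconjinv : (starRingEnd ℂ) ω⁻¹ = ω := by
    rw [map_inv₀, hconj, inv_inv]
  have hFconj : (starRingEnd ℂ) (F ω) = F ω⁻¹ := by
    rw [hF ω, hF ω⁻¹, map_sum]
    refine Finset.sum_congr rfl fun n _ => ?_
    rw [_root_.map_mul, map_zpow₀, hconj, Complex.conj_ofReal]
  have hGconj : (starRingEnd ℂ) (G ω⁻¹) = G ω := by
    rw [hG ω, hG ω⁻¹, map_sum]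
    refine Finset.sum_congr rfl fun n _ => ?_
    rw [_root_.map_mul, map_zpow₀, hconjinv, Complex.conj_ofReal]
  have hU := (Matrix.mem_unitaryGroup_iff'.mp (hunitary ω hω))
  have h00 := congrFun (congrFun hU 0) 0
  simp [Matrix.mul_apply, Matrix.one_apply, Fin.sum_univ_two, Matrix.star_apply,
    Matrix.conjTranspose_apply] at h00
  rw [hFconj, hGconj] at h00
  linear_combination h00 + G ω * G ω⁻¹ * Complex.I_sq
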